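/- Split-validity preclusion propagates along alternative upper paths: in the directly sceptical upward-chaining split-validity formalism, if σ : A ⋯→ B is a valid positive path, B → C ∈ Γ, the concatenation σ ∘ (B → C) is valid, and σ' : A ⋯→ B is another valid positive path from A to B, then σ' ∘ (B → C) is also valid. -/
import Mathlib


/-- There is a (possibly empty) valid positive path from a to b:
either a = b, or some valid path leads from a to b. -/
def Reaches {V : Type*} (Valid : List V → Prop) (a b : V) : Prop :=
  a = b ∨ ∃ τ : List V, Valid τ ∧ τ.head? = some a ∧ τ.getLast? = some b

/-- There is a proper (nonempty) valid positive path from a to b. -/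
def ReachesP {V : Type*} (Valid : List V → Prop) (a b : V) : Prop :=
  ∃ τ : List V, Valid τ ∧ τ.head? = some a ∧ τ.getLast? = some b

/-- Split-validity preclusion of the positive candidate x ⋯→ u → y:
there is v with v ↛ y ∈ Γ, a valid path (possibly empty) from x to v,
and a valid path from v to u. -/
def PrecludedPos {V : Type*} (neg : V → V → Prop) (Valid : List V → Prop)
    (x u y : V) : Prop :=
  ∃ v, neg v y ∧ Reaches Valid x v ∧ ReachesP Valid v u

/-- All potentially conflicting negative candidates against the conclusion
"x's are y's" are themselves precluded: for every v with v ↛ y ∈ Γ and a valid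
path from x to v, there is z with z → y ∈ Γ and either z = x or valid paths
from x to z and from z to v. -/
def ConflictsPrecluded {V : Type*} (pos neg : V → V → Prop)
    (Valid : List V → Prop) (x y : V) : Prop :=
  ∀ v, neg v y → ReachesP Valid x v →
    ∃ z, pos z y ∧ (z = x ∨ (ReachesP Valid x z ∧ ReachesP Valid z v))

/-- Split-validity preclusion propagates along alternative upper paths: if
σ : A ⋯→ B is valid, B → C ∈ Γ, σ ∘ (B → C) is valid, and σ' : A ⋯→ B is
another valid positive path, then σ' ∘ (B → C) is also valid. -/
theorem stmt18 {V : Type*} (pos neg : V → V → Prop) (Valid : List V → Prop)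
    (hpath : ∀ l : List V, Valid l → l.Chain' pos ∧ 2 ≤ l.length)
    (hdir : ∀ x u : V, Valid [x, u] ↔ pos x u)
    (hcomp : ∀ (σ' : List V) (x u y : V), 2 ≤ σ'.length →
      σ'.head? = some x → σ'.getLast? = some u →
      (Valid (σ' ++ [y]) ↔
        (Valid σ' ∧ pos u y ∧
         ¬ PrecludedPos neg Valid x u y ∧
         ConflictsPrecluded pos neg Valid x y))) :
    ∀ (σ σ' : List V) (A B C : V),
      Valid σ → σ.head? = some A → σ.getLast? = some B →
      pos B C → Valid (σ ++ [C]) →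
      Valid σ' → σ'.head? = some A → σ'.getLast? = some B →
      Valid (σ' ++ [C]) := by
  intro σ σ' A B C hσ hσh hσl hBC hσC hσ' hσ'h hσ'l
  have h1 := (hpath σ hσ).2
  have h2 := (hpath σ' hσ').2
  have hd := (hcomp σ A B C h1 hσh hσl).mp hσC
  exact (hcomp σ' A B C h2 hσ'h hσ'l).mpr ⟨hσ', hBC, hd.2.2.1, hd.2.2.2⟩
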